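/- Let q* be the integral point of SATP_LP(m,n) with (q*)^{1,1}_{i,j} = 1 for all i,j (and all other coordinates 0). If w ∈ SATP_LP(m,n) satisfies w^{1,1}_{i,j} > 0 for all i,j, then there exist α ∈ (0,1] and h ∈ SATP_LP(m,n) such that w = α·q* + (1−α)·h. -/

import Mathlib

open Finset

/-- A point of ℝ^{6mn}: coordinates x^{k,l}_{i,j} with `i : Fin m`, `j : Fin n`,
`k : Fin 3` (the paper's k-1, since the paper indexes k ∈ {1,2,3}) and
`l : Fin 2` (the paper's l-1). -/
abbrev Pt (m n : ℕ) := Fin m → Fin n → Fin 3 → Fin 2 → ℝ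

/-- The relaxation polytope SATP_LP(m,n), given by the constraints (i)-(iv). -/
def SATPLP (m n : ℕ) : Set (Pt m n) :=
  {x | (∀ i j, ∑ k, ∑ l, x i j k l = 1) ∧
       (∀ i j t, ∑ k, x i j k 0 = ∑ k, x i t k 0) ∧
       (∀ k j i s, x i j k 0 + x i j k 1 = x s j k 0 + x s j k 1) ∧
       (∀ i j k l, 0 ≤ x i j k l)}

/-- The integral points of SATP_LP(m,n): the points all of whose coordinates are 0 or 1. -/
def IntPts (m n : ℕ) : Set (Pt m n) :=
  {x | x ∈ SATPLP m n ∧ ∀ i j k l, x i j k l = 0 ∨ x i j k l = 1}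

/-- SATP(m,n): the convex hull of the integral points of SATP_LP(m,n). -/
def SATP (m n : ℕ) : Set (Pt m n) := convexHull ℝ (IntPts m n)

/-- The integral point q* with (q*)^{1,1}_{i,j} = 1 for all i,j and all other
coordinates 0. -/
def qstar (m n : ℕ) : Pt m n := fun _ _ k l => if k = 0 ∧ l = 0 then 1 else 0

lemma qstar_mem (m n : ℕ) : qstar m n ∈ SATPLP m n := by
  refine ⟨?_, ?_, fun k j i s => rfl, fun i j k l => by unfold qstar; split <;> norm_num⟩
  · intro i j
    simp only [qstar, Fin.sum_univ_three, Fin.sum_univ_two]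
    norm_num
    decide
  · intro i j t
    simp only [qstar, Fin.sum_univ_three]

/-- any w ∈ SATP_LP(m,n) with w^{1,1}_{i,j} > 0 for all i,j decomposes as
w = α·q* + (1-α)·h with α ∈ (0,1] and h ∈ SATP_LP(m,n). -/
theorem stmt16 (m n : ℕ) (w : Pt m n) (hw : w ∈ SATPLP m n)
    (hpos : ∀ i j, 0 < w i j 0 0) :
    ∃ α : ℝ, 0 < α ∧ α ≤ 1 ∧
      ∃ h ∈ SATPLP m n, w = α • qstar m n + (1 - α) • h := by
  obtain ⟨h1, h2, h3, h4⟩ := hw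
  rcases Nat.eq_zero_or_pos m with hm | hm
  · subst hm
    refine ⟨1, one_pos, le_refl 1, qstar 0 n, qstar_mem 0 n, ?_⟩
    funext i; exact i.elim0
  rcases Nat.eq_zero_or_pos n with hn | hn
  · subst hn
    refine ⟨1, one_pos, le_refl 1, qstar m 0, qstar_mem m 0, ?_⟩
    funext i j; exact j.elim0
  have hne : (Finset.univ : Finset (Fin m × Fin n)).Nonempty :=
    ⟨(⟨0, hm⟩, ⟨0, hn⟩), Finset.mem_univ _⟩
  set α := Finset.univ.inf' hne (fun p => w p.1 p.2 0 0) with hα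
  have hαpos : 0 < α := by
    rw [hα, Finset.lt_inf'_iff]; exact fun p _ => hpos p.1 p.2
  have hαle : ∀ i j, α ≤ w i j 0 0 := fun i j =>
    Finset.inf'_le _ (Finset.mem_univ (i, j))
  have hwle1 : ∀ i j, w i j 0 0 ≤ 1 := by
    intro i j
    have hs := h1 i j
    have n4 := h4 i j
    simp [Fin.sum_univ_succ] at hs
    nlinarith [n4 0 1, n4 1 0, n4 1 1, n4 2 0, n4 2 1]
  have hα1 : α ≤ 1 := (hαle ⟨0, hm⟩ ⟨0, hn⟩).trans (hwle1 _ _)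
  rcases eq_or_lt_of_le hα1 with heq | hlt
  · have hone : ∀ i j, w i j 0 0 = 1 := fun i j =>
      le_antisymm (hwle1 i j) (heq ▸ hαle i j)
    refine ⟨1, one_pos, le_refl 1, qstar m n, qstar_mem m n, ?_⟩
    funext i j k l
    have hs := h1 i j
    simp [Fin.sum_univ_succ] at hs
    have n4 := h4 i j
    simp only [Pi.add_apply, Pi.smul_apply, smul_eq_mul, qstar]
    fin_cases k <;> fin_cases l <;> simp <;>
      nlinarith [hone i j, n4 0 1, n4 1 0, n4 1 1, n4 2 0, n4 2 1]
  · have hβpos : (0:ℝ) < 1 - α := by linarith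
    have hβne : (1:ℝ) - α ≠ 0 := ne_of_gt hβpos
    refine ⟨α, hαpos, hα1,
      fun i j k l => (w i j k l - α * qstar m n i j k l) / (1 - α),
      ⟨?_, ?_, ?_, ?_⟩, ?_⟩
    · intro i j
      have hs := h1 i j
      simp [Fin.sum_univ_succ, qstar] at hs ⊢
      field_simp
      linarith
    · intro i j t
      have hs := h2 i j t
      simp [Fin.sum_univ_succ, qstar] at hs ⊢
      field_simp
      linarith
    · intro k j i s
      have hs := h3 k j i s
      have hq0 : qstar m n i j k 0 = qstar m n s j k 0 := rfl
      have hq1 : qstar m n i j k 1 = qstar m n s j k 1 := rfl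
      dsimp only
      rw [hq0, hq1]
      field_simp
      linarith
    · intro i j k l
      apply div_nonneg _ hβpos.le
      unfold qstar
      split
      next hkl =>
        obtain ⟨hk, hl⟩ := hkl
        subst hk; subst hl
        have := hαle i j
        linarith
      next => have := h4 i j k l; linarith
    · funext i j k l
      simp only [Pi.add_apply, Pi.smul_apply, smul_eq_mul]
      field_simp
      ring
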